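/- For any two permutation classes C and D, the growth rate of their merge satisfies s(M(C, D)) ≤ (√s(C) + √s(D))². -/

import Mathlib

open Filter

/-- `f` is an embedding (involvement) of the permutation `α` into the permutation `π`:
it is strictly monotone on positions and preserves the relative order of values. -/
def IsEmbedding {m n : ℕ} (α : Equiv.Perm (Fin m)) (π : Equiv.Perm (Fin n))
    (f : Fin m → Fin n) : Prop :=
  StrictMono f ∧ ∀ a b : Fin m, α a < α b ↔ π (f a) < π (f b)

/-- A permutation of arbitrary (finite) length. -/
abbrev PermSig := Σ n : ℕ, Equiv.Perm (Fin n)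

/-- `α ≼ π`: the pattern `α` is involved in `π`. -/
def Involves (α π : PermSig) : Prop := ∃ f, IsEmbedding α.2 π.2 f

/-- The class of permutations avoiding every pattern in `X`. -/
def AvClass (X : Set PermSig) : Set PermSig := {π | ∀ α ∈ X, ¬ Involves α π}

/-- A pattern class: a set of permutations closed downward under involvement. -/
def IsPatternClass (C : Set PermSig) : Prop :=
  ∀ α π : PermSig, Involves α π → π ∈ C → α ∈ C

/-- The number of permutations of length `n` in `C`. -/
noncomputable def classCount (C : Set PermSig) (n : ℕ) : ℕ :=
  Nat.card {π : Equiv.Perm (Fin n) // (⟨n, π⟩ : PermSig) ∈ C}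

/-- The (upper) growth rate `s(C) = limsup |C ∩ S_n|^{1/n}`, valued in `ℝ≥0∞`. -/
noncomputable def growthRate (C : Set PermSig) : ENNReal :=
  Filter.atTop.limsup fun n : ℕ => (classCount C n : ENNReal) ^ (1 / (n : ℝ))

/-- `π` contains a decreasing subsequence of length `k`. -/
def HasDecSeq {n : ℕ} (π : Equiv.Perm (Fin n)) (k : ℕ) : Prop :=
  ∃ q : Fin k → Fin n, StrictMono q ∧ StrictAnti fun i => π (q i)

/-- The class `I_k = Av(δ_{k+1})` of permutations with no decreasing
subsequence of length `k+1`. -/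
def IkClass (k : ℕ) : Set PermSig := {π | ¬ HasDecSeq π.2 (k + 1)}

/-- `f` and `g` witness `π` as a merge of `α` and `β`: both are embeddings and
their ranges partition the points of `π`. -/
def IsMergeVia {a b n : ℕ} (α : Equiv.Perm (Fin a)) (β : Equiv.Perm (Fin b))
    (π : Equiv.Perm (Fin n)) (f : Fin a → Fin n) (g : Fin b → Fin n) : Prop :=
  IsEmbedding α π f ∧ IsEmbedding β π g ∧ ∀ x : Fin n, (∃ i, f i = x) ↔ ¬∃ j, g j = x

/-- The merge `M(C, D)` of two sets of permutations. -/
def MergeClass (C D : Set PermSig) : Set PermSig :=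
  {π | ∃ α ∈ C, ∃ β ∈ D, ∃ f g, IsMergeVia α.2 β.2 π.2 f g}

/-- Number of indices `c` with `c+1 < n` such that exactly one of the points
`c`, `c+1` lies in `S`. -/
noncomputable def posChanges {n : ℕ} (S : Set (Fin n)) : ℕ :=
  Set.ncard {c : Fin n | ∃ h : (c : ℕ) + 1 < n, ¬ (c ∈ S ↔ (⟨(c : ℕ) + 1, h⟩ : Fin n) ∈ S)}

/-- Total number of type changes, by position and by value, of the merge of `π`
whose first part occupies the set of positions `S`. -/
noncomputable def typeChanges {n : ℕ} (π : Equiv.Perm (Fin n)) (S : Set (Fin n)) : ℕ :=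
  posChanges S + posChanges ((fun x => π x) '' S)

/-- The `B`-bounded merge `M_B(C, D)`: merges of a member of `C` with a member of
`D` having at most `B` type changes in total, by position or by value. -/
def BMergeClass (B : ℕ) (C D : Set PermSig) : Set PermSig :=
  {π | ∃ α ∈ C, ∃ β ∈ D, ∃ f g, IsMergeVia α.2 β.2 π.2 f g ∧
    typeChanges π.2 (Set.range f) ≤ B}

/-- The direct sum of two permutations. -/
def dsum {a b : ℕ} (α : Equiv.Perm (Fin a)) (β : Equiv.Perm (Fin b)) :
    Equiv.Perm (Fin (a + b)) :=
  finSumFinEquiv.symm.trans ((Equiv.sumCongr α β).trans finSumFinEquiv)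

/-- The direct sum `α ⊕ β` of two permutations of arbitrary lengths. -/
def DSum (α β : PermSig) : PermSig := ⟨α.1 + β.1, dsum α.2 β.2⟩

/-- The increasing permutation `ι_m` of length `m`. -/
def iotaSig (m : ℕ) : PermSig := ⟨m, 1⟩

/-- The direct sum of a list of permutations. -/
def DSumList (l : List PermSig) : PermSig := l.foldr DSum (iotaSig 0)

/-- A (nonempty) permutation that is not the direct sum of two nonempty permutations. -/
def PlusIndec (ρ : PermSig) : Prop :=
  ρ.1 ≠ 0 ∧ ∀ α β : PermSig, α.1 ≠ 0 → β.1 ≠ 0 → ρ ≠ DSum α β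

/-- `ρ = red(π)`: writing `π = ι_{m₀} ⊕ ρ₁ ⊕ ι_{m₁} ⊕ ⋯ ⊕ ρ_c ⊕ ι_{m_c}` with each
`ρ_i` plus indecomposable of length at least 2, the rigid reduction of `π` is
`ρ = ρ₁ ⊕ ⋯ ⊕ ρ_c`. -/
def IsRigidReductionOf (ρ π : PermSig) : Prop :=
  ∃ (m₀ : ℕ) (pairs : List (PermSig × ℕ)),
    (∀ p ∈ pairs, PlusIndec p.1 ∧ 2 ≤ p.1.1) ∧
    π = DSum (iotaSig m₀) (DSumList (pairs.map fun p => DSum p.1 (iotaSig p.2))) ∧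
    ρ = DSumList (pairs.map Prod.fst)

/-! ### Auxiliary material for the proof -/

section Aux

open Finset

/-- lengths add up in a merge -/
lemma IsMergeVia.add_eq {a b n : ℕ} {α : Equiv.Perm (Fin a)} {β : Equiv.Perm (Fin b)}
    {π : Equiv.Perm (Fin n)} {f : Fin a → Fin n} {g : Fin b → Fin n}
    (h : IsMergeVia α β π f g) : a + b = n := by
  have hf : Function.Injective f := h.1.1.injective
  have hg : Function.Injective g := h.2.1.1.injective
  have hbij : Function.Bijective (Sum.elim f g) := by
    constructor
    · rintro (i | i) (j | j) hij <;> simp only [Sum.elim_inl, Sum.elim_inr] at hij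
      · exact congrArg Sum.inl (hf hij)
      · exact ((h.2.2 (g j)).mp ⟨i, hij⟩ ⟨j, rfl⟩).elim
      · exact ((h.2.2 (g i)).mp ⟨j, hij.symm⟩ ⟨i, rfl⟩).elim
      · exact congrArg Sum.inr (hg hij)
    · intro x
      by_cases hx : ∃ i, f i = x
      · obtain ⟨i, rfl⟩ := hx; exact ⟨Sum.inl i, rfl⟩
      · obtain ⟨j, rfl⟩ := not_not.mp (fun hc => hx ((h.2.2 x).mpr hc))
        exact ⟨Sum.inr j, rfl⟩
  have := Fintype.card_of_bijective hbij
  simpa using this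

lemma range_g_eq {a b n : ℕ} {α : Equiv.Perm (Fin a)} {β : Equiv.Perm (Fin b)}
    {π : Equiv.Perm (Fin n)} {f : Fin a → Fin n} {g : Fin b → Fin n}
    (h : IsMergeVia α β π f g) : Set.range g = (Set.range f)ᶜ := by
  ext x
  simp only [Set.mem_range, Set.mem_compl_iff]
  exact iff_not_comm.mp (h.2.2 x)

/-- a merge is determined by the pattern pair together with the position set and
value set of the first part. -/
lemma merge_determined {a b n : ℕ} {α : Equiv.Perm (Fin a)} {β : Equiv.Perm (Fin b)}
    {π π' : Equiv.Perm (Fin n)} {f g f' g'}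
    (h : IsMergeVia α β π f g) (h' : IsMergeVia α β π' f' g')
    (hS : Set.range f = Set.range f')
    (hT : π '' Set.range f = π' '' Set.range f') : π = π' := by
  haveI : WellFoundedLT (Fin a) := inferInstance
  haveI : WellFoundedLT (Fin b) := inferInstance
  haveI : WellFoundedLT (Fin n) := inferInstance
  have hf : StrictMono f := h.1.1
  have hf' : StrictMono f' := h'.1.1
  have hg : StrictMono g := h.2.1.1
  have hg' : StrictMono g' := h'.2.1.1
  have hff : f = f' := (hf.range_inj hf').mp hS
  -- values on the first part
  have hF : StrictMono fun i => π (f (α.symm i)) := by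
    intro i j hij
    exact (h.1.2 _ _).mp (by simpa using hij)
  have hF' : StrictMono fun i => π' (f' (α.symm i)) := by
    intro i j hij
    exact (h'.1.2 _ _).mp (by simpa using hij)
  have hrF : Set.range (fun i => π (f (α.symm i))) = π '' Set.range f := by
    have : Set.range (f ∘ ⇑α.symm) = Set.range f := α.symm.surjective.range_comp f
    rw [show (fun i => π (f (α.symm i))) = π ∘ (f ∘ ⇑α.symm) from rfl, Set.range_comp, this]
  have hrF' : Set.range (fun i => π' (f' (α.symm i))) = π' '' Set.range f' := by
    have : Set.range (f' ∘ ⇑α.symm) = Set.range f' := α.symm.surjective.range_comp f'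
    rw [show (fun i => π' (f' (α.symm i))) = π' ∘ (f' ∘ ⇑α.symm) from rfl, Set.range_comp, this]
  have hFF : (fun i => π (f (α.symm i))) = fun i => π' (f' (α.symm i)) :=
    (hF.range_inj hF').mp (by rw [hrF, hrF', hT])
  have hfst : ∀ i, π (f i) = π' (f' i) := by
    intro i
    have := congrFun hFF (α i)
    simpa using this
  -- second part
  have hgr : Set.range g = Set.range g' := by
    rw [range_g_eq h, range_g_eq h', hS]
  have hgg : g = g' := (hg.range_inj hg').mp hgr
  have hG : StrictMono fun i => π (g (β.symm i)) := by
    intro i j hij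
    exact (h.2.1.2 _ _).mp (by simpa using hij)
  have hG' : StrictMono fun i => π' (g' (β.symm i)) := by
    intro i j hij
    exact (h'.2.1.2 _ _).mp (by simpa using hij)
  have hrG : Set.range (fun i => π (g (β.symm i))) = π '' Set.range g := by
    have : Set.range (g ∘ ⇑β.symm) = Set.range g := β.symm.surjective.range_comp g
    rw [show (fun i => π (g (β.symm i))) = π ∘ (g ∘ ⇑β.symm) from rfl, Set.range_comp, this]
  have hrG' : Set.range (fun i => π' (g' (β.symm i))) = π' '' Set.range g' := by
    have : Set.range (g' ∘ ⇑β.symm) = Set.range g' := β.symm.surjective.range_comp g'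
    rw [show (fun i => π' (g' (β.symm i))) = π' ∘ (g' ∘ ⇑β.symm) from rfl, Set.range_comp, this]
  have hTc : π '' Set.range g = π' '' Set.range g' := by
    rw [range_g_eq h, range_g_eq h', Set.image_compl_eq π.bijective,
      Set.image_compl_eq π'.bijective, hT]
  have hGG : (fun i => π (g (β.symm i))) = fun i => π' (g' (β.symm i)) :=
    (hG.range_inj hG').mp (by rw [hrG, hrG', hTc])
  have hsnd : ∀ j, π (g j) = π' (g' j) := by
    intro j
    have := congrFun hGG (β j)
    simpa using this
  apply Equiv.ext
  intro x
  by_cases hx : ∃ i, f i = x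
  · obtain ⟨i, rfl⟩ := hx
    rw [hfst i, hff]
  · obtain ⟨j, rfl⟩ := not_not.mp (fun hc => hx ((h.2.2 x).mpr hc))
    rw [hsnd j, hgg]

lemma permCongr_rfl {b : ℕ} (β : Equiv.Perm (Fin b)) :
    (finCongr (rfl : b = b)).permCongr β = β := by
  ext x
  simp

lemma IsMergeVia.castSnd {a b m n : ℕ} {α : Equiv.Perm (Fin a)} {β : Equiv.Perm (Fin b)}
    {π : Equiv.Perm (Fin n)} {f : Fin a → Fin n} {g : Fin b → Fin n}
    (h : IsMergeVia α β π f g) (hb : b = m) :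
    IsMergeVia α ((finCongr hb).permCongr β) π f (g ∘ (finCongr hb).symm) := by
  subst hb
  have e2 : g ∘ ⇑(finCongr (rfl : b = b)).symm = g := by
    ext x; simp
  rw [permCongr_rfl, e2]
  exact h

lemma mem_cast {E : Set PermSig} {b m : ℕ} (hb : b = m) (β : Equiv.Perm (Fin b))
    (hβ : (⟨b, β⟩ : PermSig) ∈ E) : (⟨m, (finCongr hb).permCongr β⟩ : PermSig) ∈ E := by
  subst hb
  rwa [permCongr_rfl]

/-- The key counting estimate: the number of merges of length `n` is at most
`∑ₖ C(n,k)² |C ∩ S_k| |D ∩ S_{n-k}|`. -/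
lemma classCount_merge_le (C D : Set PermSig) (n : ℕ) :
    classCount (MergeClass C D) n ≤
      ∑ k ∈ Finset.range (n + 1),
        (n.choose k) ^ 2 * classCount C k * classCount D (n - k) := by
  classical
  let T : Type :=
    Σ k : Fin (n + 1),
      ({S : Finset (Fin n) // S.card = (k : ℕ)} × {S : Finset (Fin n) // S.card = (k : ℕ)}) ×
      ({γ : Equiv.Perm (Fin (k : ℕ)) // (⟨(k : ℕ), γ⟩ : PermSig) ∈ C} ×
       {δ : Equiv.Perm (Fin (n - (k : ℕ))) // (⟨n - (k : ℕ), δ⟩ : PermSig) ∈ D})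
  let Good : Equiv.Perm (Fin n) → T → Prop := fun π t =>
    ∃ f g, IsMergeVia t.2.2.1.1 t.2.2.2.1 π f g ∧
      (t.2.1.1.1 : Set (Fin n)) = Set.range f ∧
      (t.2.1.2.1 : Set (Fin n)) = π '' Set.range f
  have key : ∀ π : {π : Equiv.Perm (Fin n) // (⟨n, π⟩ : PermSig) ∈ MergeClass C D},
      ∃ t : T, Good π.1 t := by
    rintro ⟨π, ⟨a, γ⟩, hγC, ⟨b, δ⟩, hδD, f, g, hm⟩
    have hab : a + b = n := hm.add_eq
    have ha : a < n + 1 := by omega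
    have hb : b = n - a := by omega
    refine ⟨⟨⟨a, ha⟩, ⟨⟨Finset.univ.image f, ?_⟩, ⟨Finset.univ.image fun i => π (f i), ?_⟩⟩,
      ⟨⟨γ, hγC⟩, ⟨(finCongr hb).permCongr δ, mem_cast hb δ hδD⟩⟩⟩,
      f, g ∘ (finCongr hb).symm, hm.castSnd hb, ?_, ?_⟩
    · rw [Finset.card_image_of_injective _ hm.1.1.injective, Finset.card_univ, Fintype.card_fin]
    · have hinj : Function.Injective fun i => π (f i) :=
        fun i j hij => hm.1.1.injective (π.injective hij)
      rw [Finset.card_image_of_injective _ hinj, Finset.card_univ, Fintype.card_fin]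
    · simp [Set.image_univ]
    · rw [Finset.coe_image, Finset.coe_univ, Set.image_univ]
      rw [show Set.range (fun i => π (f i)) = Set.range (π ∘ f) from rfl, Set.range_comp]
  have inj2 : ∀ (π π' : Equiv.Perm (Fin n)) (t : T), Good π t → Good π' t → π = π' := by
    rintro π π' t ⟨f, g, hm, hS, hT⟩ ⟨f', g', hm', hS', hT'⟩
    exact merge_determined hm hm' (hS.symm.trans hS') (hT.symm.trans hT')
  choose Φ hΦ using key
  have hinj : Function.Injective Φ := by
    intro π π' hpp
    exact Subtype.ext (inj2 π.1 π'.1 (Φ π) (hΦ π) (hpp ▸ hΦ π'))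
  calc classCount (MergeClass C D) n ≤ Nat.card T := Nat.card_le_card_of_injective Φ hinj
    _ = _ := by
        rw [Nat.card_eq_fintype_card, Fintype.card_sigma, ← Fin.sum_univ_eq_sum_range]
        refine Finset.sum_congr rfl fun k _ => ?_
        simp only [Fintype.card_prod, Fintype.card_finset_len, Fintype.card_fin]
        rw [classCount, classCount, Nat.card_eq_fintype_card, Nat.card_eq_fintype_card]
        ring

open ENNReal in
lemma ennreal_sum_sq_le {ι : Type*} (s : Finset ι) (f : ι → ℝ≥0∞) :
    ∑ i ∈ s, f i ^ 2 ≤ (∑ i ∈ s, f i) ^ 2 := by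
  calc ∑ i ∈ s, f i ^ 2 ≤ ∑ i ∈ s, f i * ∑ j ∈ s, f j :=
        Finset.sum_le_sum fun i hi => by
          rw [sq]
          exact mul_le_mul_right (Finset.single_le_sum (fun _ _ => zero_le) hi) _
    _ = (∑ i ∈ s, f i) ^ 2 := by rw [← Finset.sum_mul, sq]

open ENNReal in
/-- From a strict bound on the limsup of `n`-th roots, obtain a uniform
geometric bound. -/
lemma exists_const_bound (c : ℕ → ℕ) {x : ℝ≥0∞} (hx0 : x ≠ 0) (hxt : x ≠ ∞)
    (h : Filter.atTop.limsup (fun n : ℕ => (c n : ℝ≥0∞) ^ (1 / (n : ℝ))) < x) :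
    ∃ K : ℝ≥0∞, K ≠ 0 ∧ K ≠ ∞ ∧ ∀ n, (c n : ℝ≥0∞) ≤ K * x ^ n := by
  obtain ⟨N, hN⟩ := Filter.eventually_atTop.mp (Filter.eventually_lt_of_limsup_lt h)
  set K : ℝ≥0∞ := 1 + ∑ k ∈ Finset.range (N + 1), (c k : ℝ≥0∞) * (x ^ k)⁻¹ with hK
  have hxk : ∀ k : ℕ, x ^ k ≠ 0 := fun k => pow_ne_zero k hx0
  have hxkt : ∀ k : ℕ, x ^ k ≠ ∞ := fun _ => ENNReal.pow_ne_top hxt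
  refine ⟨K, ?_, ?_, ?_⟩
  · rw [hK]
    simp
  · rw [hK]
    refine ENNReal.add_ne_top.mpr ⟨ENNReal.one_ne_top, ENNReal.sum_ne_top.mpr fun k _ => ?_⟩
    exact ENNReal.mul_ne_top (ENNReal.natCast_ne_top _) (ENNReal.inv_ne_top.mpr (hxk k))
  · intro n
    rcases le_or_gt n N with hn | hn
    · have h1 : (c n : ℝ≥0∞) * (x ^ n)⁻¹ ≤ K := by
        rw [hK]
        exact le_trans (Finset.single_le_sum (f := fun k => (c k : ℝ≥0∞) * (x ^ k)⁻¹)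
          (fun _ _ => zero_le) (Finset.mem_range.mpr (by omega))) (self_le_add_left _ _)
      calc (c n : ℝ≥0∞) = ((c n : ℝ≥0∞) * (x ^ n)⁻¹) * x ^ n := by
            rw [mul_assoc, ENNReal.inv_mul_cancel (hxk n) (hxkt n), mul_one]
        _ ≤ K * x ^ n := mul_le_mul_left h1 _
    · have h2 := (hN n (by omega)).le
      have hnn : (0 : ℝ) < (n : ℝ) := by
        have : 0 < n := by omega
        exact_mod_cast this
      rw [one_div, ENNReal.rpow_inv_le_iff hnn, ENNReal.rpow_natCast] at h2
      calc (c n : ℝ≥0∞) ≤ x ^ n := h2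
        _ ≤ K * x ^ n := by
            nth_rewrite 1 [← one_mul (x ^ n)]
            exact mul_le_mul_left (by rw [hK]; exact le_self_add) _

end Aux

open ENNReal Topology

/-- For any two permutation classes `C` and `D`,
`s(M(C,D)) ≤ (√s(C) + √s(D))²`. -/
theorem growthRate_merge_le (C D : Set PermSig)
    (hC : IsPatternClass C) (hD : IsPatternClass D) :
    growthRate (MergeClass C D) ≤
      (growthRate C ^ ((1 : ℝ) / 2) + growthRate D ^ ((1 : ℝ) / 2)) ^ (2 : ℕ) := by
  classical
  by_cases hCt : growthRate C = ∞
  · rw [hCt, ENNReal.top_rpow_of_pos (by norm_num), top_add, ENNReal.top_pow (by norm_num)]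
    exact le_top
  by_cases hDt : growthRate D = ∞
  · rw [hDt, ENNReal.top_rpow_of_pos (by norm_num), add_top, ENNReal.top_pow (by norm_num)]
    exact le_top
  -- Main step: a bound for any strict majorants `x` and `y` of the two growth rates.
  have main : ∀ x y : ℝ≥0∞, x ≠ 0 → x ≠ ∞ → y ≠ 0 → y ≠ ∞ →
      growthRate C < x → growthRate D < y →
      growthRate (MergeClass C D) ≤ (x ^ ((1 : ℝ) / 2) + y ^ ((1 : ℝ) / 2)) ^ (2 : ℕ) := by
    intro x y hx0 hxt hy0 hyt hcx hdy
    obtain ⟨K₁, hK₁0, hK₁t, hK₁⟩ := exists_const_bound (classCount C) hx0 hxt hcx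
    obtain ⟨K₂, hK₂0, hK₂t, hK₂⟩ := exists_const_bound (classCount D) hy0 hyt hdy
    set x' : ℝ≥0∞ := x ^ ((1 : ℝ) / 2) with hx'
    set y' : ℝ≥0∞ := y ^ ((1 : ℝ) / 2) with hy'
    set R : ℝ≥0∞ := (x' + y') ^ (2 : ℕ) with hR
    have hxhalf : x' ^ (2 : ℕ) = x := by
      rw [hx', ← ENNReal.rpow_natCast, ← ENNReal.rpow_mul]
      norm_num
    have hyhalf : y' ^ (2 : ℕ) = y := by
      rw [hy', ← ENNReal.rpow_natCast, ← ENNReal.rpow_mul]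
      norm_num
    have hbound : ∀ n, (classCount (MergeClass C D) n : ℝ≥0∞) ≤ (K₁ * K₂) * R ^ n := by
      intro n
      calc (classCount (MergeClass C D) n : ℝ≥0∞)
          ≤ ∑ k ∈ Finset.range (n + 1),
              (n.choose k : ℝ≥0∞) ^ 2 * (classCount C k : ℝ≥0∞) *
                (classCount D (n - k) : ℝ≥0∞) := by
            have h0 := classCount_merge_le C D n
            have := (Nat.cast_le (α := ℝ≥0∞)).mpr h0
            push_cast at this
            exact this
        _ ≤ ∑ k ∈ Finset.range (n + 1),
              (n.choose k : ℝ≥0∞) ^ 2 * (K₁ * x ^ k) * (K₂ * y ^ (n - k)) := by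
            gcongr with k hk
            exacts [hK₁ k, hK₂ (n - k)]
        _ = (K₁ * K₂) * ∑ k ∈ Finset.range (n + 1),
              ((n.choose k : ℝ≥0∞) * x' ^ k * y' ^ (n - k)) ^ 2 := by
            rw [Finset.mul_sum]
            refine Finset.sum_congr rfl fun k hk => ?_
            rw [mul_pow, mul_pow, pow_right_comm x' k 2, pow_right_comm y' (n - k) 2,
              hxhalf, hyhalf]
            ring
        _ ≤ (K₁ * K₂) * (∑ k ∈ Finset.range (n + 1),
              (n.choose k : ℝ≥0∞) * x' ^ k * y' ^ (n - k)) ^ 2 :=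
            mul_le_mul_right (ennreal_sum_sq_le _ _) _
        _ = (K₁ * K₂) * R ^ n := by
            have hb : ∑ k ∈ Finset.range (n + 1),
                (n.choose k : ℝ≥0∞) * x' ^ k * y' ^ (n - k) = (x' + y') ^ n := by
              rw [add_pow]
              exact Finset.sum_congr rfl fun k _ => by ring
            rw [hb, hR, ← pow_mul, ← pow_mul, Nat.mul_comm]
    have hL : ∀ z : ℝ≥0∞, 1 < z → growthRate (MergeClass C D) ≤ z * R := by
      intro z hz
      have hev : ∀ᶠ n : ℕ in atTop,
          (classCount (MergeClass C D) n : ℝ≥0∞) ^ (1 / (n : ℝ)) ≤ z * R := by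
        have h1 := ENNReal.eventually_pow_one_div_le
          (x := K₁ * K₂) (ENNReal.mul_ne_top hK₁t hK₂t) hz
        filter_upwards [h1, Filter.eventually_ge_atTop 1] with n hn1 hn2
        have hnn : (0 : ℝ) < (n : ℝ) := by exact_mod_cast hn2
        calc (classCount (MergeClass C D) n : ℝ≥0∞) ^ (1 / (n : ℝ))
            ≤ ((K₁ * K₂) * R ^ n) ^ (1 / (n : ℝ)) :=
              ENNReal.rpow_le_rpow (hbound n) (by positivity)
          _ = (K₁ * K₂) ^ (1 / (n : ℝ)) * (R ^ n) ^ (1 / (n : ℝ)) :=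
              ENNReal.mul_rpow_of_nonneg _ _ (by positivity)
          _ = (K₁ * K₂) ^ (1 / (n : ℝ)) * R := by
              rw [← ENNReal.rpow_natCast R n, ← ENNReal.rpow_mul, mul_one_div,
                div_self (ne_of_gt hnn), ENNReal.rpow_one]
          _ ≤ z * R := mul_le_mul_left hn1 _
      exact Filter.limsup_le_of_le (by isBoundedDefault) hev
    refine ENNReal.le_of_forall_lt_one_mul_le fun a ha => ?_
    rcases eq_or_ne a 0 with rfl | ha0
    · simp
    have hat : a ≠ ∞ := (ha.trans_le le_top).ne
    have h1 : 1 < a⁻¹ := ENNReal.one_lt_inv.mpr ha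
    calc a * growthRate (MergeClass C D) ≤ a * (a⁻¹ * R) :=
          mul_le_mul_right (hL a⁻¹ h1) a
      _ = (a * a⁻¹) * R := by rw [mul_assoc]
      _ = R := by rw [ENNReal.mul_inv_cancel ha0 hat, one_mul]
  -- Take limits `x → s(C)`, `y → s(D)` along `x = s(C) + 1/m`, `y = s(D) + 1/m`.
  have hle : ∀ m : ℕ, 1 ≤ m → growthRate (MergeClass C D) ≤
      ((growthRate C + ((m : ℝ≥0∞))⁻¹) ^ ((1 : ℝ) / 2) +
        (growthRate D + ((m : ℝ≥0∞))⁻¹) ^ ((1 : ℝ) / 2)) ^ (2 : ℕ) := by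
    intro m hm
    have hminv0 : ((m : ℝ≥0∞))⁻¹ ≠ 0 := by
      simp [ENNReal.inv_ne_zero, ENNReal.natCast_ne_top]
    have hminvt : ((m : ℝ≥0∞))⁻¹ ≠ ∞ := by
      refine ENNReal.inv_ne_top.mpr ?_
      exact_mod_cast Nat.pos_iff_ne_zero.mp (by omega)
    exact main _ _ (by simp [hminv0]) (ENNReal.add_ne_top.mpr ⟨hCt, hminvt⟩)
      (by simp [hminv0]) (ENNReal.add_ne_top.mpr ⟨hDt, hminvt⟩)
      (ENNReal.lt_add_right hCt hminv0) (ENNReal.lt_add_right hDt hminv0)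
  have htend : Tendsto (fun m : ℕ =>
      ((growthRate C + ((m : ℝ≥0∞))⁻¹) ^ ((1 : ℝ) / 2) +
        (growthRate D + ((m : ℝ≥0∞))⁻¹) ^ ((1 : ℝ) / 2)) ^ (2 : ℕ)) atTop
      (𝓝 ((growthRate C ^ ((1 : ℝ) / 2) + growthRate D ^ ((1 : ℝ) / 2)) ^ (2 : ℕ))) := by
    have h0 : Tendsto (fun m : ℕ => ((m : ℝ≥0∞))⁻¹) atTop (𝓝 0) :=
      ENNReal.tendsto_inv_nat_nhds_zero
    have hC2 : Tendsto (fun m : ℕ => growthRate C + ((m : ℝ≥0∞))⁻¹) atTop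
        (𝓝 (growthRate C)) := by
      simpa using tendsto_const_nhds.add h0
    have hD2 : Tendsto (fun m : ℕ => growthRate D + ((m : ℝ≥0∞))⁻¹) atTop
        (𝓝 (growthRate D)) := by
      simpa using tendsto_const_nhds.add h0
    have hCr : Tendsto (fun m : ℕ => (growthRate C + ((m : ℝ≥0∞))⁻¹) ^ ((1 : ℝ) / 2)) atTop
        (𝓝 (growthRate C ^ ((1 : ℝ) / 2))) :=
      (ENNReal.continuous_rpow_const.tendsto _).comp hC2
    have hDr : Tendsto (fun m : ℕ => (growthRate D + ((m : ℝ≥0∞))⁻¹) ^ ((1 : ℝ) / 2)) atTop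
        (𝓝 (growthRate D ^ ((1 : ℝ) / 2))) :=
      (ENNReal.continuous_rpow_const.tendsto _).comp hD2
    have hadd := hCr.add hDr
    have h2 := (ENNReal.continuous_rpow_const (y := (2 : ℝ))).tendsto _ |>.comp hadd
    have e : ∀ t : ENNReal, t ^ (2 : ℝ) = t ^ (2 : ℕ) := fun t => by
      rw [← ENNReal.rpow_natCast]
      norm_num
    simp only [Function.comp, e] at h2
    exact h2
  exact ge_of_tendsto htend (Filter.eventually_atTop.mpr ⟨1, hle⟩)
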